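/- (Precise Makespan Lower Bound for random MAPF on 2D grids.) Let m1 ≥ m2 ≥ 1, let α ∈ (0, 1/2), set a1 = ⌊α·m1⌋ and a2 = ⌊α·m2⌋, and let n ≥ 1. Let s_1, g_1, …, s_n, g_n be 2n mutually independent random vertices, each uniformly distributed on V = Fin m1 × Fin m2. Then with probability at least 1 − (1 − (a1·a2/(m1·m2))²)^n, there is an agent i whose start s_i lies in the top-left a1×a2 subgrid (rows 0,…,a1−1 and columns 0,…,a2−1) and whose goal g_i lies in the bottom-right a1×a2 subgrid (rows m1−a1,…,m1−1 and columns m2−a2,…,m2−1); for such an agent the Manhattan distance from s_i to g_i is at least m1 + m2 − 2·a1 − 2·a2. Consequently, with probability at least 1 − (1 − (a1·a2/(m1·m2))²)^n, the maximum over agents of the Manhattan distance from start to goal is at least m1 + m2 − 2·a1 − 2·a2. -/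

import Mathlib

/-- The Manhattan distance between two vertices of the `m1 × m2` grid. -/
def MDist {m1 m2 : ℕ} (u v : Fin m1 × Fin m2) : ℕ :=
  (((u.1 : ℕ) : ℤ) - ((v.1 : ℕ) : ℤ)).natAbs + (((u.2 : ℕ) : ℤ) - ((v.2 : ℕ) : ℤ)).natAbs

lemma cardLT (m a : ℕ) (ha : a ≤ m) :
    (Finset.univ.filter fun x : Fin m => (x:ℕ) < a).card = a := by
  rw [Finset.card_filter, Fin.sum_univ_eq_sum_range (fun k => if k < a then 1 else 0),
    ← Finset.card_filter]
  have : (Finset.range m).filter (fun x => x < a) = Finset.range a := by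
    ext x; simp [Finset.mem_range]; omega
  rw [this, Finset.card_range]

lemma cardGE (m a : ℕ) (ha : a ≤ m) :
    (Finset.univ.filter fun x : Fin m => m - a ≤ (x:ℕ)).card = a := by
  rw [Finset.card_filter, Fin.sum_univ_eq_sum_range (fun k => if m - a ≤ k then 1 else 0),
    ← Finset.card_filter]
  have : (Finset.range m).filter (fun x => m - a ≤ x) = Finset.Ico (m-a) m := by
    ext x; simp [Finset.mem_range, Finset.mem_Ico]; omega
  rw [this, Nat.card_Ico]; omega

lemma cardProdFilter (α β : Type) [Fintype α] [Fintype β] (p : α → Prop) (q : β → Prop)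
    [DecidablePred p] [DecidablePred q] :
    (Finset.univ.filter fun x : α × β => p x.1 ∧ q x.2).card
      = (Finset.univ.filter p).card * (Finset.univ.filter q).card := by
  rw [← Finset.univ_product_univ, Finset.filter_product, Finset.card_product]

lemma cardExists {X : Type} [Fintype X] {n : ℕ} (P : X → Prop) [DecidablePred P]
    [DecidablePred fun ω : Fin n → X => ∃ i, P (ω i)] :
    (Finset.univ.filter fun ω : Fin n → X => ∃ i, P (ω i)).card
      = Fintype.card X ^ n
        - (Fintype.card X - (Finset.univ.filter P).card) ^ n := by
  have hsplit := Finset.card_filter_add_card_filter_not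
    (s := (Finset.univ : Finset (Fin n → X))) (p := fun ω => ∃ i, P (ω i))
  have hneg : (Finset.univ.filter fun ω : Fin n → X => ¬ ∃ i, P (ω i))
      = Finset.univ.filter fun ω : Fin n → X => ∀ i, ¬ P (ω i) := by
    ext ω; simp
  rw [hneg] at hsplit
  have h2 : (Finset.univ.filter fun ω : Fin n → X => ∀ i, ¬ P (ω i)).card
      = (Finset.univ.filter fun x : X => ¬ P x).card ^ n := by
    rw [← Fintype.card_subtype, ← Fintype.card_subtype,
      Fintype.card_congr (Equiv.subtypePiEquivPi (p := fun _ : Fin n => fun x : X => ¬ P x)),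
      Fintype.card_pi]
    simp
  have hcardu : (Finset.univ : Finset (Fin n → X)).card = Fintype.card X ^ n := by
    simp [Fintype.card_fun]
  have hP := Finset.card_filter_add_card_filter_not
    (s := (Finset.univ : Finset X)) (p := P)
  simp only [Finset.card_univ] at hP
  have hB' : (Finset.univ.filter fun x : X => ¬ P x).card
      = Fintype.card X - (Finset.univ.filter P).card := by
    clear hsplit h2 hneg hcardu; omega
  have h2' : (Finset.univ.filter fun ω : Fin n → X => ∀ i, ¬ P (ω i)).card
      = (Fintype.card X - (Finset.univ.filter P).card) ^ n :=
    h2.trans (congrArg (fun t => t ^ n) hB')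
  refine Nat.eq_sub_of_add_eq ?_
  rw [← h2']
  exact hsplit.trans hcardu

lemma ratio_eq (n M c : ℕ) (hM : 0 < M) (hc : c ≤ M) :
    (((M*M) ^ n - (M*M - c*c) ^ n : ℕ) : ℝ) / (((M*M) ^ n : ℕ) : ℝ)
      = 1 - (1 - ((c:ℝ)/(M:ℝ))^2)^n := by
  have h1 : c*c ≤ M*M := Nat.mul_le_mul hc hc
  have h2 : (M*M - c*c)^n ≤ (M*M)^n := Nat.pow_le_pow_left (Nat.sub_le _ _) n
  have hM0 : ((M:ℝ)) ≠ 0 := Nat.cast_ne_zero.2 hM.ne'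
  rw [Nat.cast_sub h2]
  push_cast [Nat.cast_sub h1]
  have hq : 1 - ((c:ℝ)/M)^2 = ((M:ℝ)*M - (c:ℝ)*c)/((M:ℝ)*M) := by
    field_simp
  rw [hq, div_pow, sub_div, div_self (by positivity)]

open Classical in
theorem random_mapf_makespan_lower_bound_2d
    (m1 m2 n : ℕ) (h21 : m2 ≤ m1) (h2 : 1 ≤ m2) (hn : 1 ≤ n)
    (α : ℝ) (hα0 : 0 < α) (hα1 : α < 1 / 2)
    (a1 a2 : ℕ) (ha1 : a1 = ⌊α * m1⌋₊) (ha2 : a2 = ⌊α * m2⌋₊) :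
    (∀ u v : Fin m1 × Fin m2,
        (u.1 : ℕ) < a1 → (u.2 : ℕ) < a2 →
        m1 - a1 ≤ (v.1 : ℕ) → m2 - a2 ≤ (v.2 : ℕ) →
        m1 + m2 - 2 * a1 - 2 * a2 ≤ MDist u v) ∧
    1 - (1 - ((a1 : ℝ) * (a2 : ℝ) / ((m1 : ℝ) * (m2 : ℝ))) ^ 2) ^ n ≤
      ((Finset.univ.filter
          (fun ω : Fin n → (Fin m1 × Fin m2) × (Fin m1 × Fin m2) =>
            ∃ i, ((ω i).1.1 : ℕ) < a1 ∧ ((ω i).1.2 : ℕ) < a2 ∧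
              m1 - a1 ≤ ((ω i).2.1 : ℕ) ∧ m2 - a2 ≤ ((ω i).2.2 : ℕ))).card : ℝ) /
        (Fintype.card (Fin n → (Fin m1 × Fin m2) × (Fin m1 × Fin m2)) : ℝ) ∧
    1 - (1 - ((a1 : ℝ) * (a2 : ℝ) / ((m1 : ℝ) * (m2 : ℝ))) ^ 2) ^ n ≤
      ((Finset.univ.filter
          (fun ω : Fin n → (Fin m1 × Fin m2) × (Fin m1 × Fin m2) =>
            ∃ i, m1 + m2 - 2 * a1 - 2 * a2 ≤ MDist (ω i).1 (ω i).2)).card : ℝ) /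
        (Fintype.card (Fin n → (Fin m1 × Fin m2) × (Fin m1 × Fin m2)) : ℝ) := by
  have hm1 : 1 ≤ m1 := le_trans h2 h21
  have ha1m : a1 ≤ m1 := by
    rw [ha1]
    calc ⌊α * m1⌋₊ ≤ ⌊(m1:ℝ)⌋₊ :=
          Nat.floor_le_floor (by nlinarith [(Nat.cast_nonneg m1 : (0:ℝ) ≤ m1)])
    _ = m1 := Nat.floor_natCast m1
  have ha2m : a2 ≤ m2 := by
    rw [ha2]
    calc ⌊α * m2⌋₊ ≤ ⌊(m2:ℝ)⌋₊ :=
          Nat.floor_le_floor (by nlinarith [(Nat.cast_nonneg m2 : (0:ℝ) ≤ m2)])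
    _ = m2 := Nat.floor_natCast m2
  have hdist : ∀ u v : Fin m1 × Fin m2,
      (u.1 : ℕ) < a1 → (u.2 : ℕ) < a2 →
      m1 - a1 ≤ (v.1 : ℕ) → m2 - a2 ≤ (v.2 : ℕ) →
      m1 + m2 - 2 * a1 - 2 * a2 ≤ MDist u v := by
    intro u v hu1 hu2 hv1 hv2
    simp only [MDist]
    omega
  -- counting
  have hcardP : (Finset.univ.filter
      (fun x : (Fin m1 × Fin m2) × (Fin m1 × Fin m2) =>
        (x.1.1 : ℕ) < a1 ∧ (x.1.2 : ℕ) < a2 ∧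
          m1 - a1 ≤ (x.2.1 : ℕ) ∧ m2 - a2 ≤ (x.2.2 : ℕ))).card
      = a1 * a2 * (a1 * a2) := by
    have e2 : (Finset.univ.filter
        (fun v : Fin m1 × Fin m2 => (v.1 : ℕ) < a1 ∧ (v.2 : ℕ) < a2)).card = a1 * a2 := by
      have h := cardProdFilter (Fin m1) (Fin m2)
        (fun y : Fin m1 => (y:ℕ) < a1) (fun y : Fin m2 => (y:ℕ) < a2)
      rw [cardLT m1 a1 ha1m, cardLT m2 a2 ha2m] at h
      exact h
    have e3 : (Finset.univ.filter
        (fun v : Fin m1 × Fin m2 => m1 - a1 ≤ (v.1 : ℕ) ∧ m2 - a2 ≤ (v.2 : ℕ))).card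
        = a1 * a2 := by
      have h := cardProdFilter (Fin m1) (Fin m2)
        (fun y : Fin m1 => m1 - a1 ≤ (y:ℕ)) (fun y : Fin m2 => m2 - a2 ≤ (y:ℕ))
      rw [cardGE m1 a1 ha1m, cardGE m2 a2 ha2m] at h
      exact h
    have e1 := cardProdFilter (Fin m1 × Fin m2) (Fin m1 × Fin m2)
      (fun v : Fin m1 × Fin m2 => (v.1 : ℕ) < a1 ∧ (v.2 : ℕ) < a2)
      (fun v : Fin m1 × Fin m2 => m1 - a1 ≤ (v.1 : ℕ) ∧ m2 - a2 ≤ (v.2 : ℕ))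
    rw [e2, e3] at e1
    rw [← e1]
    congr 1
    ext x
    simp only [Finset.mem_filter]
    tauto
  have hcardX : Fintype.card ((Fin m1 × Fin m2) × (Fin m1 × Fin m2)) = m1 * m2 * (m1 * m2) := by
    simp
  have hc1 : (Finset.univ.filter
      (fun ω : Fin n → (Fin m1 × Fin m2) × (Fin m1 × Fin m2) =>
        ∃ i, ((ω i).1.1 : ℕ) < a1 ∧ ((ω i).1.2 : ℕ) < a2 ∧
          m1 - a1 ≤ ((ω i).2.1 : ℕ) ∧ m2 - a2 ≤ ((ω i).2.2 : ℕ))).card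
      = (m1 * m2 * (m1 * m2)) ^ n - (m1 * m2 * (m1 * m2) - a1 * a2 * (a1 * a2)) ^ n := by
    have h := cardExists (X := (Fin m1 × Fin m2) × (Fin m1 × Fin m2)) (n := n)
      (fun x => (x.1.1 : ℕ) < a1 ∧ (x.1.2 : ℕ) < a2 ∧
        m1 - a1 ≤ (x.2.1 : ℕ) ∧ m2 - a2 ≤ (x.2.2 : ℕ))
    rw [hcardP, hcardX] at h
    exact h
  have hdenom : Fintype.card (Fin n → (Fin m1 × Fin m2) × (Fin m1 × Fin m2))
      = (m1 * m2 * (m1 * m2)) ^ n := by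
    simp [Fintype.card_fun]
  have hMpos : 0 < m1 * m2 := Nat.mul_pos hm1 h2
  have hcM : a1 * a2 ≤ m1 * m2 := Nat.mul_le_mul ha1m ha2m
  have hcast : ((a1 * a2 : ℕ) : ℝ) / ((m1 * m2 : ℕ) : ℝ)
      = (a1 : ℝ) * (a2 : ℝ) / ((m1 : ℝ) * (m2 : ℝ)) := by
    push_cast; ring
  have hprob : 1 - (1 - ((a1 : ℝ) * (a2 : ℝ) / ((m1 : ℝ) * (m2 : ℝ))) ^ 2) ^ n ≤
      ((Finset.univ.filter
          (fun ω : Fin n → (Fin m1 × Fin m2) × (Fin m1 × Fin m2) =>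
            ∃ i, ((ω i).1.1 : ℕ) < a1 ∧ ((ω i).1.2 : ℕ) < a2 ∧
              m1 - a1 ≤ ((ω i).2.1 : ℕ) ∧ m2 - a2 ≤ ((ω i).2.2 : ℕ))).card : ℝ) /
        (Fintype.card (Fin n → (Fin m1 × Fin m2) × (Fin m1 × Fin m2)) : ℝ) := by
    rw [hc1, hdenom, ratio_eq n (m1 * m2) (a1 * a2) hMpos hcM, hcast]
  refine ⟨hdist, hprob, ?_⟩
  have hsub : (Finset.univ.filter
      (fun ω : Fin n → (Fin m1 × Fin m2) × (Fin m1 × Fin m2) =>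
        ∃ i, ((ω i).1.1 : ℕ) < a1 ∧ ((ω i).1.2 : ℕ) < a2 ∧
          m1 - a1 ≤ ((ω i).2.1 : ℕ) ∧ m2 - a2 ≤ ((ω i).2.2 : ℕ))).card
      ≤ (Finset.univ.filter
          (fun ω : Fin n → (Fin m1 × Fin m2) × (Fin m1 × Fin m2) =>
            ∃ i, m1 + m2 - 2 * a1 - 2 * a2 ≤ MDist (ω i).1 (ω i).2)).card := by
    apply Finset.card_le_card
    apply Finset.monotone_filter_right
    intro ω _ hω
    obtain ⟨i, hi1, hi2, hi3, hi4⟩ := hω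
    exact ⟨i, hdist _ _ hi1 hi2 hi3 hi4⟩
  refine le_trans hprob ?_
  have hne : Nonempty (Fin n → (Fin m1 × Fin m2) × (Fin m1 × Fin m2)) :=
    ⟨fun _ => ((⟨0, hm1⟩, ⟨0, h2⟩), (⟨0, hm1⟩, ⟨0, h2⟩))⟩
  have hD : (0:ℝ) < (Fintype.card (Fin n → (Fin m1 × Fin m2) × (Fin m1 × Fin m2)) : ℝ) := by
    exact_mod_cast Fintype.card_pos
  exact (div_le_div_iff_of_pos_right hD).mpr (by exact_mod_cast hsub)
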